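/- For φ(s) = 1/(1 − s) (the Matsumoto function), the regularity inequality φ(s) − s φ'(s) + (b² − s²) φ''(s) > 0 holds for all s with |s| ≤ b if and only if b < 1/2, where 0 ≤ b and |s| ≤ b < 1 is assumed. -/

import Mathlib

lemma matsumoto_d1 (s : ℝ) (h : (1:ℝ) - s ≠ 0) :
    HasDerivAt (fun x : ℝ => 1 / (1 - x)) (((1 - s) ^ 2)⁻¹) s := by
  have h1 : HasDerivAt (fun x : ℝ => 1 - x) (-1) s := (hasDerivAt_id s).const_sub 1
  have : HasDerivAt (fun x : ℝ => (1 - x)⁻¹) _ s := h1.inv h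
  simpa [one_div] using this.congr_deriv (by field_simp)

lemma matsumoto_deriv1 (s : ℝ) (h : (1:ℝ) - s ≠ 0) :
    deriv (fun x : ℝ => 1 / (1 - x)) s = ((1 - s) ^ 2)⁻¹ :=
  (matsumoto_d1 s h).deriv

lemma matsumoto_deriv2 (s : ℝ) (h : (1:ℝ) - s ≠ 0) :
    deriv (deriv (fun x : ℝ => 1 / (1 - x))) s = 2 * ((1 - s) ^ 3)⁻¹ := by
  have hne : s ≠ 1 := fun hs => h (by simp [hs])
  have hev : deriv (fun x : ℝ => 1 / (1 - x)) =ᶠ[nhds s] fun x => ((1 - x) ^ 2)⁻¹ := by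
    filter_upwards [isOpen_ne.mem_nhds hne] with x hx
    exact matsumoto_deriv1 x (sub_ne_zero.mpr (Ne.symm hx))
  rw [hev.deriv_eq]
  have h1 : HasDerivAt (fun x : ℝ => 1 - x) (-1) s := (hasDerivAt_id s).const_sub 1
  have h2 : HasDerivAt (fun x : ℝ => (1 - x) ^ 2) (2 * (1 - s) ^ 1 * (-1)) s := h1.pow 2
  have h3 : HasDerivAt (fun x : ℝ => ((1 - x) ^ 2)⁻¹) _ s := h2.inv (pow_ne_zero 2 h)
  rw [h3.deriv]
  field_simp

theorem stmt6 (b : ℝ) (hb0 : 0 ≤ b) (hb1 : b < 1)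
    (φ : ℝ → ℝ) (hφ : φ = fun s => 1 / (1 - s)) :
    (∀ s : ℝ, |s| ≤ b →
        φ s - s * deriv φ s + (b ^ 2 - s ^ 2) * deriv (deriv φ) s > 0) ↔
      b < 1 / 2 := by
  subst hφ
  have key : ∀ s : ℝ, |s| ≤ b →
      ((fun x : ℝ => 1 / (1 - x)) s - s * deriv (fun x : ℝ => 1 / (1 - x)) s
        + (b ^ 2 - s ^ 2) * deriv (deriv (fun x : ℝ => 1 / (1 - x))) s
        = (1 - 3 * s + 2 * b ^ 2) / (1 - s) ^ 3) := by
    intro s hs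
    have hs1 : s < 1 := lt_of_le_of_lt (le_trans (le_abs_self s) hs) hb1
    have h : (1:ℝ) - s ≠ 0 := by linarith
    rw [matsumoto_deriv1 s h, matsumoto_deriv2 s h]
    field_simp
    ring
  constructor
  · intro H
    have hb := H b (by rw [abs_of_nonneg hb0])
    rw [key b (by rw [abs_of_nonneg hb0])] at hb
    have hpos : (0:ℝ) < (1 - b) ^ 3 := pow_pos (by linarith) 3
    have : 0 < 1 - 3 * b + 2 * b ^ 2 := by
      by_contra hc
      push_neg at hc
      have := div_nonpos_of_nonpos_of_nonneg hc hpos.le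
      linarith
    nlinarith
  · intro hb s hs
    rw [key s hs]
    have hsb : -b ≤ s ∧ s ≤ b := abs_le.mp hs
    have hs1 : s < 1 := lt_of_le_of_lt hsb.2 hb1
    have hpos : (0:ℝ) < (1 - s) ^ 3 := pow_pos (by linarith) 3
    apply div_pos _ hpos
    nlinarith [hsb.1, hsb.2]
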